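/- arXiv:2410.06610 — 3 statements merged into one kernel-verified Lean document; each statement's English description precedes it below -/
import Mathlib

section
/- Applying the projection Π₂ ⊗ Π₂ with Π₂ = |0⟩⟨0| + |1⟩⟨1| to the d-dimensional Werner state W^(d)(v) and normalizing yields the two-qubit Werner state W^(2)(v') with v' = 3(d−1)v / [(d+1)(1−v) + 3(d−1)v]. -/
open Matrix

noncomputable section

/-- The swap operator `V` on `ℂ^d ⊗ ℂ^d`. -/
def swapOp (d : ℕ) : Matrix (Fin d × Fin d) (Fin d × Fin d) ℂ :=
  fun p q => if p.1 = q.2 ∧ p.2 = q.1 then 1 else 0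

/-- `Π₊ = (I + V)/2`. -/
def piPlus (d : ℕ) : Matrix (Fin d × Fin d) (Fin d × Fin d) ℂ :=
  (1 / 2 : ℂ) • (1 + swapOp d)

/-- `Π₋ = (I - V)/2`. -/
def piMinus (d : ℕ) : Matrix (Fin d × Fin d) (Fin d × Fin d) ℂ :=
  (1 / 2 : ℂ) • (1 - swapOp d)

/-- The Werner state `W^(d)(v) = (v/n₊) Π₊ + ((1-v)/n₋) Π₋` with `n± = d(d±1)/2`. -/
def werner (d : ℕ) (v : ℝ) : Matrix (Fin d × Fin d) (Fin d × Fin d) ℂ :=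
  ((v / ((d : ℝ) * ((d : ℝ) + 1) / 2) : ℝ) : ℂ) • piPlus d +
    (((1 - v) / ((d : ℝ) * ((d : ℝ) - 1) / 2) : ℝ) : ℂ) • piMinus d

/-- The compression of a two-qudit operator onto the two-qubit subspace
`span{|0⟩,|1⟩} ⊗ span{|0⟩,|1⟩}` (the image of `Π₂ ⊗ Π₂`, identified with `ℂ²⊗ℂ²`). -/
def qubitCompress {d : ℕ} (hd : 2 ≤ d) (M : Matrix (Fin d × Fin d) (Fin d × Fin d) ℂ) :
    Matrix (Fin 2 × Fin 2) (Fin 2 × Fin 2) ℂ :=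
  fun a b =>
    M (Fin.castLE hd a.1, Fin.castLE hd a.2) (Fin.castLE hd b.1, Fin.castLE hd b.2)

/-- Applying the local projection `Π₂ ⊗ Π₂` (with `Π₂ = |0⟩⟨0| + |1⟩⟨1|`) to `W^(d)(v)`
and normalizing by the trace yields the two-qubit Werner state `W^(2)(v')` with
`v' = 3(d-1)v / [(d+1)(1-v) + 3(d-1)v]`. -/
theorem filtered_werner_is_two_qubit_werner (d : ℕ) (hd : 2 ≤ d) (v : ℝ)
    (hv : v ∈ Set.Icc (0 : ℝ) 1) :
    Matrix.trace (qubitCompress hd (werner d v)) ≠ 0 ∧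
      (Matrix.trace (qubitCompress hd (werner d v)))⁻¹ • qubitCompress hd (werner d v) =
        werner 2 (3 * ((d : ℝ) - 1) * v /
          (((d : ℝ) + 1) * (1 - v) + 3 * ((d : ℝ) - 1) * v)) := by
  obtain ⟨hv0, hv1⟩ := hv
  set r := (d : ℝ) with hrdef
  have hr : (2:ℝ) ≤ r := by rw [hrdef]; exact_mod_cast hd
  have hr0 : (0:ℝ) < r := by linarith
  have hrp : (0:ℝ) < r + 1 := by linarith
  have hrm : (0:ℝ) < r - 1 := by linarith
  set a : ℝ := v / (r * (r + 1) / 2) with hadef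
  set b : ℝ := (1 - v) / (r * (r - 1) / 2) with hbdef
  set D : ℝ := (r + 1) * (1 - v) + 3 * (r - 1) * v with hDdef
  have hD : 0 < D := by
    rcases lt_or_eq_of_le hv0 with h | h
    · nlinarith
    · nlinarith
  have hcomp : qubitCompress hd (werner d v) = ((a : ℝ) : ℂ) • piPlus 2 + ((b : ℝ) : ℂ) • piMinus 2 := by
    ext p q
    simp [qubitCompress, werner, piPlus, piMinus, swapOp, Matrix.one_apply,
      Prod.ext_iff, Fin.castLE_inj, Matrix.add_apply, Matrix.smul_apply,
      Matrix.sub_apply, hadef, hbdef, hrdef]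
  have hT : (3 * a + b : ℝ) = 2 * D / (r * (r + 1) * (r - 1)) := by
    rw [hadef, hbdef, hDdef]
    field_simp
    ring
  have hTpos : (0:ℝ) < 3 * a + b := by
    rw [hT]
    positivity
  have htr : Matrix.trace (qubitCompress hd (werner d v)) = ((3 * a + b : ℝ) : ℂ) := by
    rw [hcomp]
    simp [Matrix.trace, piPlus, piMinus, swapOp, Matrix.one_apply, Matrix.diag,
      Fintype.sum_prod_type, Fin.sum_univ_succ, Matrix.add_apply, Matrix.smul_apply,
      Matrix.sub_apply]
    ring
  refine ⟨by rw [htr]; exact_mod_cast hTpos.ne', ?_⟩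
  set v' : ℝ := 3 * (r - 1) * v / D with hv'def
  have hw2 : werner 2 v' = ((v' / 3 : ℝ) : ℂ) • piPlus 2 + (((1 - v') / 1 : ℝ) : ℂ) • piMinus 2 := by
    unfold werner
    norm_num
  rw [htr, hcomp, hw2, smul_add, smul_smul, smul_smul]
  have e1 : (3 * a + b)⁻¹ * a = v' / 3 := by
    rw [hT, hadef, hv'def, hDdef]
    field_simp
  have e2 : (3 * a + b)⁻¹ * b = (1 - v') / 1 := by
    have key : (3 * a + b)⁻¹ * b = (3 * a + b)⁻¹ * (3 * a + b) - 3 * ((3 * a + b)⁻¹ * a) := by ring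
    rw [key, inv_mul_cancel₀ hTpos.ne', e1]
    ring
  congr 2
  · exact_mod_cast congrArg (Complex.ofReal) e1
  · exact_mod_cast congrArg (Complex.ofReal) e2
end
end

section
/- If a two-qubit state ρ has fully-entangled fraction F₂(ρ) > 1/2, then for every integer d > 2 the embedding of ρ into C^d ⊗ C^d (padding with zeros) has fully-entangled fraction F_d > 1/d. -/
open Matrix Kronecker ComplexOrder

noncomputable section

/-- The maximally entangled vector `|Φ_d⟩ = (1/√d) ∑ᵢ |i⟩|i⟩`. -/
def phiME (d : ℕ) : Fin d × Fin d → ℂ :=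
  fun p => if p.1 = p.2 then ((1 / Real.sqrt d : ℝ) : ℂ) else 0

/-- The fully-entangled fraction
`F_d(ρ) = max_U ⟨Φ_d| (I ⊗ U)† ρ (I ⊗ U) |Φ_d⟩` over `d × d` unitaries `U`. -/
def fef (d : ℕ) (ρ : Matrix (Fin d × Fin d) (Fin d × Fin d) ℂ) : ℝ :=
  sSup { x : ℝ | ∃ U ∈ Matrix.unitaryGroup (Fin d) ℂ,
    x = (star (phiME d) ⬝ᵥ
      ((((1 : Matrix (Fin d) (Fin d) ℂ) ⊗ₖ U)ᴴ * ρ *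
        ((1 : Matrix (Fin d) (Fin d) ℂ) ⊗ₖ U)).mulVec (phiME d))).re }

/-- Embedding of a two-qubit operator into `ℂ^d ⊗ ℂ^d` (padding with zeros), identifying
the qubit basis `{|0⟩, |1⟩}` with the first two basis vectors of `ℂ^d` on each side. -/
def embedQubit (d : ℕ) (ρ : Matrix (Fin 2 × Fin 2) (Fin 2 × Fin 2) ℂ) :
    Matrix (Fin d × Fin d) (Fin d × Fin d) ℂ :=
  fun p q =>
    if h : p.1.val < 2 ∧ p.2.val < 2 ∧ q.1.val < 2 ∧ q.2.val < 2 then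
      ρ (⟨p.1.val, h.1⟩, ⟨p.2.val, h.2.1⟩) (⟨q.1.val, h.2.2.1⟩, ⟨q.2.val, h.2.2.2⟩)
    else 0

namespace FefAux

lemma sum_restrict {d : ℕ} (hd : 2 ≤ d) (f : Fin d → ℂ)
    (hf : ∀ i : Fin d, ¬ i.val < 2 → f i = 0) :
    ∑ i, f i = ∑ i : Fin 2, f (Fin.castLE hd i) := by
  classical
  have h1 : ∑ i ∈ Finset.univ.filter (fun i : Fin d => i.val < 2), f i = ∑ i, f i :=
    Finset.sum_subset (Finset.subset_univ _) (fun x _ hx => hf x (by simpa using hx))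
  rw [← h1]
  refine Finset.sum_nbij' (fun a : Fin d => (⟨a.val % 2, Nat.mod_lt _ two_pos⟩ : Fin 2))
    (fun b : Fin 2 => Fin.castLE hd b) (fun a _ => Finset.mem_univ _) ?_ ?_ ?_ ?_
  · intro b _; simp [b.isLt]; have := b.isLt; omega
  · intro a ha
    have h : a.val < 2 := by simpa using ha
    ext; simp [Nat.mod_eq_of_lt h]
  · intro b _; ext; simp [Nat.mod_eq_of_lt b.isLt]
  · intro a ha
    have h : a.val < 2 := by simpa using ha
    congr 1; ext; simp [Nat.mod_eq_of_lt h]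

lemma sum_restrict2 {d : ℕ} (hd : 2 ≤ d) (f : Fin d × Fin d → ℂ)
    (hf : ∀ p : Fin d × Fin d, ¬ (p.1.val < 2 ∧ p.2.val < 2) → f p = 0) :
    ∑ p, f p = ∑ a : Fin 2, ∑ b : Fin 2, f (Fin.castLE hd a, Fin.castLE hd b) := by
  rw [Fintype.sum_prod_type]
  rw [sum_restrict hd (fun i => ∑ j, f (i, j))
    (fun i hi => Finset.sum_eq_zero fun j _ => hf _ (fun h => hi h.1))]
  exact Finset.sum_congr rfl fun a _ =>
    sum_restrict hd (fun j => f (Fin.castLE hd a, j)) (fun j hj => hf _ (fun h => hj h.2))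

lemma sum_restrict4 {d : ℕ} (hd : 2 ≤ d) (g : (Fin d × Fin d) → (Fin d × Fin d) → ℂ)
    (hg : ∀ p q, ¬ (p.1.val < 2 ∧ p.2.val < 2 ∧ q.1.val < 2 ∧ q.2.val < 2) → g p q = 0) :
    ∑ p, ∑ q, g p q =
      ∑ a : Fin 2, ∑ b : Fin 2, ∑ c : Fin 2, ∑ e : Fin 2,
        g (Fin.castLE hd a, Fin.castLE hd b) (Fin.castLE hd c, Fin.castLE hd e) := by
  rw [sum_restrict2 hd (fun p => ∑ q, g p q)
    (fun p hp => Finset.sum_eq_zero fun q _ => hg _ _ (fun h => hp ⟨h.1, h.2.1⟩))]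
  refine Finset.sum_congr rfl fun a _ => Finset.sum_congr rfl fun b _ => ?_
  exact sum_restrict2 hd _ (fun q hq => hg _ _ (fun h => hq ⟨h.2.2.1, h.2.2.2⟩))

lemma qform_conj {n : Type*} [Fintype n] (σ W : Matrix n n ℂ) (v : n → ℂ) :
    star v ⬝ᵥ (Wᴴ * σ * W) *ᵥ v = star (W *ᵥ v) ⬝ᵥ σ *ᵥ (W *ᵥ v) := by
  rw [← mulVec_mulVec, ← mulVec_mulVec, dotProduct_mulVec, ← star_mulVec]

lemma mulVec_phi {d : ℕ} (U : Matrix (Fin d) (Fin d) ℂ) (p : Fin d × Fin d) :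
    (((1 : Matrix (Fin d) (Fin d) ℂ) ⊗ₖ U) *ᵥ phiME d) p
      = ((1 / Real.sqrt d : ℝ) : ℂ) * U p.2 p.1 := by
  simp only [Matrix.mulVec, dotProduct, Fintype.sum_prod_type, kroneckerMap_apply, phiME,
    Matrix.one_apply]
  simp [Finset.sum_ite_eq, ite_mul, mul_ite, mul_comm]

lemma coef_eq (d : ℕ) :
    (starRingEnd ℂ) ((1 / Real.sqrt d : ℝ) : ℂ) * ((1 / Real.sqrt d : ℝ) : ℂ)
      = ((1 / (d : ℝ) : ℝ) : ℂ) := by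
  rw [Complex.conj_ofReal, ← Complex.ofReal_mul]
  congr 1
  rw [div_mul_div_comm, one_mul, Real.mul_self_sqrt (by positivity)]

lemma qform_eq {d : ℕ} (σ : Matrix (Fin d × Fin d) (Fin d × Fin d) ℂ)
    (U : Matrix (Fin d) (Fin d) ℂ) :
    star (phiME d) ⬝ᵥ ((((1 : Matrix (Fin d) (Fin d) ℂ) ⊗ₖ U)ᴴ * σ *
        ((1 : Matrix (Fin d) (Fin d) ℂ) ⊗ₖ U)) *ᵥ phiME d)
      = ∑ p : Fin d × Fin d, ∑ q : Fin d × Fin d,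
          (starRingEnd ℂ) (U p.2 p.1) * σ p q * U q.2 q.1 * ((1 / (d : ℝ) : ℝ) : ℂ) := by
  rw [qform_conj]
  rw [show (((1 : Matrix (Fin d) (Fin d) ℂ) ⊗ₖ U) *ᵥ phiME d)
      = fun p => ((1 / Real.sqrt d : ℝ) : ℂ) * U p.2 p.1 from funext (mulVec_phi U)]
  simp only [dotProduct, Matrix.mulVec, Pi.star_apply]
  refine Finset.sum_congr rfl fun p _ => ?_
  rw [Finset.mul_sum]
  refine Finset.sum_congr rfl fun q _ => ?_
  rw [show (star (((1 / Real.sqrt d : ℝ) : ℂ) * U p.2 p.1) : ℂ)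
      = (starRingEnd ℂ) ((1 / Real.sqrt d : ℝ) : ℂ) * (starRingEnd ℂ) (U p.2 p.1) from by
    simp [star_mul']]
  calc ((starRingEnd ℂ) ((1 / Real.sqrt d : ℝ) : ℂ) * (starRingEnd ℂ) (U p.2 p.1)) *
        (σ p q * (((1 / Real.sqrt d : ℝ) : ℂ) * U q.2 q.1))
      = ((starRingEnd ℂ) ((1 / Real.sqrt d : ℝ) : ℂ) * ((1 / Real.sqrt d : ℝ) : ℂ)) *
        ((starRingEnd ℂ) (U p.2 p.1) * σ p q * U q.2 q.1) := by ring
    _ = _ := by rw [coef_eq d]; ring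

def padU (d : ℕ) (U : Matrix (Fin 2) (Fin 2) ℂ) : Matrix (Fin d) (Fin d) ℂ :=
  fun i j => if h : i.val < 2 ∧ j.val < 2 then U ⟨i.val, h.1⟩ ⟨j.val, h.2⟩
    else if i = j then 1 else 0

lemma cast_back {d : ℕ} (hd : 2 ≤ d) (a : Fin 2) (h : (Fin.castLE hd a).val < 2) :
    (⟨(Fin.castLE hd a).val, h⟩ : Fin 2) = a := by ext; simp

lemma padU_apply_cast {d : ℕ} (hd : 2 ≤ d) (U : Matrix (Fin 2) (Fin 2) ℂ) (a b : Fin 2) :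
    padU d U (Fin.castLE hd a) (Fin.castLE hd b) = U a b := by
  rw [padU, dif_pos ⟨by simpa using a.isLt, by simpa using b.isLt⟩, cast_back, cast_back]

lemma padU_mem {d : ℕ} (hd : 2 ≤ d) {U : Matrix (Fin 2) (Fin 2) ℂ}
    (hU : U ∈ Matrix.unitaryGroup (Fin 2) ℂ) :
    padU d U ∈ Matrix.unitaryGroup (Fin d) ℂ := by
  have hU' : star U * U = 1 := Matrix.mem_unitaryGroup_iff'.mp hU
  rw [Matrix.mem_unitaryGroup_iff']
  ext i j
  rw [Matrix.mul_apply]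
  simp only [Matrix.star_apply]
  by_cases hi : i.val < 2 <;> by_cases hj : j.val < 2
  · -- both small
    rw [sum_restrict hd (fun k => star (padU d U k i) * padU d U k j) ?_]
    · have key : ∑ k : Fin 2, star (U k ⟨i.val, hi⟩) * U k ⟨j.val, hj⟩
          = (star U * U) (⟨i.val, hi⟩ : Fin 2) ⟨j.val, hj⟩ := by
        rw [Matrix.mul_apply]
        exact Finset.sum_congr rfl fun k _ => rfl
      have h2 : ∀ k : Fin 2, padU d U (Fin.castLE hd k) i = U k ⟨i.val, hi⟩ := by
        intro k
        rw [padU, dif_pos ⟨by simpa using k.isLt, hi⟩, cast_back]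
      have h3 : ∀ k : Fin 2, padU d U (Fin.castLE hd k) j = U k ⟨j.val, hj⟩ := by
        intro k
        rw [padU, dif_pos ⟨by simpa using k.isLt, hj⟩, cast_back]
      simp only [h2, h3]
      rw [key, hU']
      by_cases hij : i = j
      · subst hij; simp [Matrix.one_apply]
      · rw [Matrix.one_apply_ne hij, Matrix.one_apply_ne]
        intro hc
        exact hij (Fin.ext (by simpa [Fin.ext_iff] using hc))
    · intro k hk
      have h0 : padU d U k i = 0 := by
        rw [padU, dif_neg (fun h => hk h.1), if_neg (by rintro rfl; exact hk hi)]
      show star (padU d U k i) * padU d U k j = 0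
      rw [h0, star_zero, zero_mul]
  · -- i small, j large
    rw [Matrix.one_apply_ne (by rintro rfl; exact hj hi)]
    refine Finset.sum_eq_zero fun k _ => ?_
    by_cases hk : k.val < 2
    · have : padU d U k j = 0 := by
        rw [padU, dif_neg (fun h => hj h.2), if_neg (by rintro rfl; exact hj hk)]
      rw [this, mul_zero]
    · have : padU d U k i = 0 := by
        rw [padU, dif_neg (fun h => hk h.1), if_neg (by rintro rfl; exact hk hi)]
      rw [this, star_zero, zero_mul]
  · -- i large, j small
    rw [Matrix.one_apply_ne (by rintro rfl; exact hi hj)]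
    refine Finset.sum_eq_zero fun k _ => ?_
    by_cases hk : k.val < 2
    · have : padU d U k i = 0 := by
        rw [padU, dif_neg (fun h => hi h.2), if_neg (by rintro rfl; exact hi hk)]
      rw [this, star_zero, zero_mul]
    · have : padU d U k j = 0 := by
        rw [padU, dif_neg (fun h => hk h.1), if_neg (by rintro rfl; exact hk hj)]
      rw [this, mul_zero]
  · -- both large
    have hpi : ∀ k : Fin d, padU d U k i = if k = i then 1 else 0 := by
      intro k; rw [padU, dif_neg (fun h => hi h.2)]
    have hpj : ∀ k : Fin d, padU d U k j = if k = j then 1 else 0 := by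
      intro k; rw [padU, dif_neg (fun h => hj h.2)]
    simp only [hpi, hpj, apply_ite (star : ℂ → ℂ), star_one, star_zero, ite_mul, one_mul,
      zero_mul, Matrix.one_apply]
    simp [Finset.sum_ite_eq]

lemma embed_apply_cast {d : ℕ} (hd : 2 ≤ d) (ρ : Matrix (Fin 2 × Fin 2) (Fin 2 × Fin 2) ℂ)
    (a b c e : Fin 2) :
    embedQubit d ρ (Fin.castLE hd a, Fin.castLE hd b) (Fin.castLE hd c, Fin.castLE hd e)
      = ρ (a, b) (c, e) := by
  rw [embedQubit, dif_pos ⟨by simp [a.isLt], by simp [b.isLt], by simp [c.isLt],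
    by simp [e.isLt]⟩]
  congr 1 <;> ext <;> simp

lemma trace_embed {d : ℕ} (hd : 2 ≤ d) (ρ : Matrix (Fin 2 × Fin 2) (Fin 2 × Fin 2) ℂ) :
    (embedQubit d ρ).trace = ρ.trace := by
  rw [Matrix.trace, Matrix.trace]
  simp only [Matrix.diag]
  rw [sum_restrict2 hd (fun p => embedQubit d ρ p p)
    (fun p hp => by simp only [embedQubit]; rw [dif_neg (fun h => hp ⟨h.1, h.2.1⟩)])]
  rw [Fintype.sum_prod_type]
  exact Finset.sum_congr rfl fun a _ => Finset.sum_congr rfl fun b _ =>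
    embed_apply_cast hd ρ a b a b

lemma embed_posSemidef {d : ℕ} (hd : 2 ≤ d) {ρ : Matrix (Fin 2 × Fin 2) (Fin 2 × Fin 2) ℂ}
    (hρ : ρ.PosSemidef) : (embedQubit d ρ).PosSemidef := by
  rw [Matrix.posSemidef_iff_dotProduct_mulVec]
  constructor
  · ext p q
    rw [Matrix.conjTranspose_apply]
    by_cases h : p.1.val < 2 ∧ p.2.val < 2 ∧ q.1.val < 2 ∧ q.2.val < 2
    · rw [embedQubit, embedQubit, dif_pos h, dif_pos ⟨h.2.2.1, h.2.2.2, h.1, h.2.1⟩]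
      have := congrFun (congrFun hρ.1 (⟨p.1.val, h.1⟩, ⟨p.2.val, h.2.1⟩))
        (⟨q.1.val, h.2.2.1⟩, ⟨q.2.val, h.2.2.2⟩)
      rw [Matrix.conjTranspose_apply] at this
      exact this
    · rw [embedQubit, embedQubit, dif_neg h,
        dif_neg (fun hc => h ⟨hc.2.2.1, hc.2.2.2, hc.1, hc.2.1⟩), star_zero]
  · intro x
    have key : star x ⬝ᵥ embedQubit d ρ *ᵥ x
        = star (fun a : Fin 2 × Fin 2 => x (Fin.castLE hd a.1, Fin.castLE hd a.2)) ⬝ᵥ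
          ρ *ᵥ (fun a : Fin 2 × Fin 2 => x (Fin.castLE hd a.1, Fin.castLE hd a.2)) := by
      simp only [dotProduct, Matrix.mulVec, Pi.star_apply, Finset.mul_sum]
      rw [sum_restrict4 hd
        (fun p q => star (x p) * (embedQubit d ρ p q * x q))
        (fun p q hpq => by
          simp only [embedQubit]; rw [dif_neg hpq, zero_mul, mul_zero])]
      simp only [Fintype.sum_prod_type]
      refine Finset.sum_congr rfl fun a _ => Finset.sum_congr rfl fun b _ =>
        Finset.sum_congr rfl fun c _ => Finset.sum_congr rfl fun e _ => ?_
      rw [embed_apply_cast hd]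
    rw [key]
    exact hρ.dotProduct_mulVec_nonneg _

lemma re_qform_le {n : Type*} [Fintype n] [DecidableEq n] {σ : Matrix n n ℂ}
    (hσ : σ.PosSemidef) (v : n → ℂ) :
    (star v ⬝ᵥ σ *ᵥ v).re ≤ (∑ j, Complex.normSq (v j)) * σ.trace.re := by
  obtain ⟨B, rfl⟩ : ∃ B : Matrix n n ℂ, σ = Bᴴ * B := by
    open scoped MatrixOrder in
    exact CStarAlgebra.nonneg_iff_eq_star_mul_self.mp hσ.nonneg
  have h1 : star v ⬝ᵥ (Bᴴ * B) *ᵥ v = star (B *ᵥ v) ⬝ᵥ (B *ᵥ v) := by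
    rw [← Matrix.mulVec_mulVec, Matrix.dotProduct_mulVec, ← Matrix.star_mulVec]
  rw [h1]
  have h2 : (star (B *ᵥ v) ⬝ᵥ (B *ᵥ v)).re = ∑ i, Complex.normSq ((B *ᵥ v) i) := by
    rw [dotProduct, Complex.re_sum]
    refine Finset.sum_congr rfl fun i _ => ?_
    simp [Complex.mul_re, Complex.normSq_apply]
  rw [h2]
  have h3 : (Bᴴ * B).trace.re = ∑ i, ∑ j, Complex.normSq (B j i) := by
    rw [Matrix.trace, Complex.re_sum]
    refine Finset.sum_congr rfl fun i _ => ?_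
    rw [Matrix.diag, Matrix.mul_apply, Complex.re_sum]
    refine Finset.sum_congr rfl fun j _ => ?_
    rw [Matrix.conjTranspose_apply]
    simp [Complex.mul_re, Complex.normSq_apply]
  rw [h3]
  calc ∑ i, Complex.normSq ((B *ᵥ v) i)
      ≤ ∑ i, (∑ j, Complex.normSq (B i j)) * (∑ j, Complex.normSq (v j)) := by
        refine Finset.sum_le_sum fun i _ => ?_
        have hci : ‖(B *ᵥ v) i‖ ≤ ∑ j, ‖B i j‖ * ‖v j‖ := by
          rw [Matrix.mulVec, dotProduct]
          refine le_trans (norm_sum_le _ _) (le_of_eq ?_)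
          exact Finset.sum_congr rfl fun j _ => by
            rw [norm_mul]
        calc Complex.normSq ((B *ᵥ v) i) = ‖(B *ᵥ v) i‖ ^ 2 :=
              (Complex.sq_norm _).symm
          _ ≤ (∑ j, ‖B i j‖ * ‖v j‖) ^ 2 :=
              pow_le_pow_left₀ (norm_nonneg _) hci 2
          _ ≤ (∑ j, ‖B i j‖ ^ 2) * (∑ j, ‖v j‖ ^ 2) :=
              Finset.sum_mul_sq_le_sq_mul_sq _ _ _
          _ = (∑ j, Complex.normSq (B i j)) * (∑ j, Complex.normSq (v j)) := by
              simp [Complex.sq_norm]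
    _ = (∑ j, Complex.normSq (v j)) * (∑ i, ∑ j, Complex.normSq (B j i)) := by
        rw [← Finset.sum_mul, Finset.sum_comm]
        ring

lemma phi_normSq {d : ℕ} (hd : 0 < d) :
    ∑ p : Fin d × Fin d, Complex.normSq (phiME d p) = 1 := by
  simp only [phiME, Fintype.sum_prod_type, apply_ite Complex.normSq, Complex.normSq_ofReal,
    map_zero]
  have h1 : ∀ a : Fin d, (∑ b : Fin d, if a = b then (1 / Real.sqrt d) * (1 / Real.sqrt d) else 0)
      = (1 / Real.sqrt d) * (1 / Real.sqrt d) := fun a => by simp [Finset.sum_ite_eq]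
  simp only [h1, Finset.sum_const, Finset.card_univ, Fintype.card_fin, nsmul_eq_mul]
  rw [div_mul_div_comm, one_mul, Real.mul_self_sqrt (by positivity)]
  field_simp

lemma kron_conjTranspose {d : ℕ} (U : Matrix (Fin d) (Fin d) ℂ) :
    ((1 : Matrix (Fin d) (Fin d) ℂ) ⊗ₖ U)ᴴ = (1 : Matrix (Fin d) (Fin d) ℂ) ⊗ₖ Uᴴ := by
  ext p q
  rw [Matrix.conjTranspose_apply, kroneckerMap_apply, kroneckerMap_apply, star_mul',
    Matrix.conjTranspose_apply]
  congr 1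
  by_cases h : q.1 = p.1
  · rw [h, Matrix.one_apply_eq]; exact star_one ℂ
  · rw [Matrix.one_apply_ne h, Matrix.one_apply_ne (Ne.symm h), star_zero]

lemma kron_unitary {d : ℕ} {U : Matrix (Fin d) (Fin d) ℂ}
    (hU : U ∈ Matrix.unitaryGroup (Fin d) ℂ) :
    ((1 : Matrix (Fin d) (Fin d) ℂ) ⊗ₖ U)ᴴ * ((1 : Matrix (Fin d) (Fin d) ℂ) ⊗ₖ U) = 1 ∧
    ((1 : Matrix (Fin d) (Fin d) ℂ) ⊗ₖ U) * ((1 : Matrix (Fin d) (Fin d) ℂ) ⊗ₖ U)ᴴ = 1 := by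
  have h1 : Uᴴ * U = 1 := by
    have := Matrix.mem_unitaryGroup_iff'.mp hU
    rwa [Matrix.star_eq_conjTranspose] at this
  have h2 : U * Uᴴ = 1 := by
    have := Matrix.mem_unitaryGroup_iff.mp hU
    rwa [Matrix.star_eq_conjTranspose] at this
  constructor
  · rw [kron_conjTranspose, ← Matrix.mul_kronecker_mul, one_mul, h1, Matrix.one_kronecker_one]
  · rw [kron_conjTranspose, ← Matrix.mul_kronecker_mul, one_mul, h2, Matrix.one_kronecker_one]

/-- The core quadratic form value. -/
def Tval (ρ : Matrix (Fin 2 × Fin 2) (Fin 2 × Fin 2) ℂ) (U : Matrix (Fin 2) (Fin 2) ℂ) : ℂ :=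
  ∑ a : Fin 2, ∑ b : Fin 2, ∑ c : Fin 2, ∑ e : Fin 2,
    (starRingEnd ℂ) (U b a) * ρ (a, b) (c, e) * U e c

lemma qform_two (ρ : Matrix (Fin 2 × Fin 2) (Fin 2 × Fin 2) ℂ)
    (U : Matrix (Fin 2) (Fin 2) ℂ) :
    star (phiME 2) ⬝ᵥ ((((1 : Matrix (Fin 2) (Fin 2) ℂ) ⊗ₖ U)ᴴ * ρ *
        ((1 : Matrix (Fin 2) (Fin 2) ℂ) ⊗ₖ U)) *ᵥ phiME 2)
      = Tval ρ U * ((1 / ((2 : ℕ) : ℝ) : ℝ) : ℂ) := by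
  rw [qform_eq, Tval]
  simp only [Fintype.sum_prod_type, Finset.sum_mul]

lemma qform_embed {d : ℕ} (hd : 2 ≤ d) (ρ : Matrix (Fin 2 × Fin 2) (Fin 2 × Fin 2) ℂ)
    (U : Matrix (Fin 2) (Fin 2) ℂ) :
    star (phiME d) ⬝ᵥ ((((1 : Matrix (Fin d) (Fin d) ℂ) ⊗ₖ padU d U)ᴴ * embedQubit d ρ *
        ((1 : Matrix (Fin d) (Fin d) ℂ) ⊗ₖ padU d U)) *ᵥ phiME d)
      = Tval ρ U * ((1 / (d : ℝ) : ℝ) : ℂ) := by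
  rw [qform_eq]
  rw [sum_restrict4 hd
    (fun p q => (starRingEnd ℂ) (padU d U p.2 p.1) * embedQubit d ρ p q * padU d U q.2 q.1 *
      ((1 / (d : ℝ) : ℝ) : ℂ))
    (fun p q hpq => by
      simp only [embedQubit]; rw [dif_neg hpq, mul_zero, zero_mul, zero_mul])]
  rw [Tval]
  simp only [Finset.sum_mul]
  refine Finset.sum_congr rfl fun a _ => Finset.sum_congr rfl fun b _ =>
    Finset.sum_congr rfl fun c _ => Finset.sum_congr rfl fun e _ => ?_
  rw [padU_apply_cast hd, padU_apply_cast hd, embed_apply_cast hd]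

end FefAux

open FefAux in
/-- If a two-qubit state `ρ` has fully-entangled fraction `F₂(ρ) > 1/2`, then for every
integer `d > 2` its embedding into `ℂ^d ⊗ ℂ^d` has fully-entangled fraction `F_d > 1/d`. -/
theorem fef_embed_gt (d : ℕ) (hd : 2 < d) (ρ : Matrix (Fin 2 × Fin 2) (Fin 2 × Fin 2) ℂ)
    (hρ : ρ.PosSemidef) (htr : Matrix.trace ρ = 1) (hF : 1 / 2 < fef 2 ρ) :
    1 / (d : ℝ) < fef d (embedQubit d ρ) := by
  have hd2 : 2 ≤ d := hd.le
  rw [fef] at hF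
  have hne : { x : ℝ | ∃ U ∈ Matrix.unitaryGroup (Fin 2) ℂ,
      x = (star (phiME 2) ⬝ᵥ
        ((((1 : Matrix (Fin 2) (Fin 2) ℂ) ⊗ₖ U)ᴴ * ρ *
          ((1 : Matrix (Fin 2) (Fin 2) ℂ) ⊗ₖ U)).mulVec (phiME 2))).re }.Nonempty :=
    ⟨_, ⟨1, one_mem _, rfl⟩⟩
  obtain ⟨x, hxmem, hx⟩ := exists_lt_of_lt_csSup hne hF
  obtain ⟨U₂, hU₂, rfl⟩ := hxmem
  rw [qform_two] at hx
  have hT : 1 < (Tval ρ U₂).re := by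
    simp [Complex.mul_re] at hx
    linarith
  rw [fef]
  have hd0 : (0 : ℝ) < (d : ℝ) := by exact_mod_cast (by omega : 0 < d)
  have hmemd : ((Tval ρ U₂).re * (1 / (d : ℝ))) ∈
      { x : ℝ | ∃ U ∈ Matrix.unitaryGroup (Fin d) ℂ,
        x = (star (phiME d) ⬝ᵥ
          ((((1 : Matrix (Fin d) (Fin d) ℂ) ⊗ₖ U)ᴴ * embedQubit d ρ *
            ((1 : Matrix (Fin d) (Fin d) ℂ) ⊗ₖ U)).mulVec (phiME d))).re } := by
    refine ⟨padU d U₂, padU_mem hd2 hU₂, ?_⟩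
    rw [qform_embed hd2]
    simp [Complex.mul_re]
  have hbdd : BddAbove { x : ℝ | ∃ U ∈ Matrix.unitaryGroup (Fin d) ℂ,
      x = (star (phiME d) ⬝ᵥ
        ((((1 : Matrix (Fin d) (Fin d) ℂ) ⊗ₖ U)ᴴ * embedQubit d ρ *
          ((1 : Matrix (Fin d) (Fin d) ℂ) ⊗ₖ U)).mulVec (phiME d))).re } := by
    refine ⟨1, ?_⟩
    rintro y ⟨U, hU, rfl⟩
    have hσ : ((((1 : Matrix (Fin d) (Fin d) ℂ) ⊗ₖ U)ᴴ) * embedQubit d ρ *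
        ((1 : Matrix (Fin d) (Fin d) ℂ) ⊗ₖ U)).PosSemidef :=
      (embed_posSemidef hd2 hρ).conjTranspose_mul_mul_same _
    have htrσ : ((((1 : Matrix (Fin d) (Fin d) ℂ) ⊗ₖ U)ᴴ) * embedQubit d ρ *
        ((1 : Matrix (Fin d) (Fin d) ℂ) ⊗ₖ U)).trace = 1 := by
      rw [Matrix.trace_mul_cycle, (kron_unitary hU).2, one_mul, trace_embed hd2, htr]
    calc (star (phiME d) ⬝ᵥ _).re
        ≤ (∑ j, Complex.normSq (phiME d j)) * (1 : ℂ).re := by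
          rw [← htrσ]
          exact re_qform_le hσ _
      _ = 1 := by
          rw [phi_normSq (by omega)]
          simp
  refine lt_of_lt_of_le ?_ (le_csSup hbdd hmemd)
  calc 1 / (d : ℝ) = 1 * (1 / (d : ℝ)) := (one_mul _).symm
    _ < (Tval ρ U₂).re * (1 / (d : ℝ)) :=
        mul_lt_mul_of_pos_right hT (by positivity)
end
end

section
/- For the d-dimensional Werner state, δ[W^(d)(v)] := log₂ d + v·log₂(2v/(d(d+1))) + (1−v)·log₂(2(1−v)/(d(d−1))) is strictly negative for all integers d ≥ 3 and all v ∈ (0,1); hence no two-qudit Werner state with d ≥ 3 is useful for dense coding. -/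
/-- For all integers `d ≥ 3` and all `v ∈ (0,1)`,
`δ[W^(d)(v)] = log₂ d + v log₂(2v/(d(d+1))) + (1-v) log₂(2(1-v)/(d(d-1))) < 0`;
hence no two-qudit Werner state with `d ≥ 3` is useful for dense coding. -/
theorem werner_not_dense_codable (d : ℕ) (hd : 3 ≤ d) (v : ℝ) (hv : v ∈ Set.Ioo (0 : ℝ) 1) :
    Real.logb 2 d + v * Real.logb 2 (2 * v / ((d : ℝ) * ((d : ℝ) + 1))) +
      (1 - v) * Real.logb 2 (2 * (1 - v) / ((d : ℝ) * ((d : ℝ) - 1))) < 0 := by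
  obtain ⟨hv0, hv1⟩ := hv
  have hv1' : 0 < 1 - v := by linarith
  have hd3 : (3 : ℝ) ≤ (d : ℝ) := by exact_mod_cast hd
  have hd0 : (0 : ℝ) < d := by linarith
  have hdne : (d : ℝ) ≠ 0 := ne_of_gt hd0
  have hxne : 2 * v / ((d : ℝ) * ((d : ℝ) + 1)) ≠ 0 := by
    apply div_ne_zero (by positivity)
    positivity
  have hyne : 2 * (1 - v) / ((d : ℝ) * ((d : ℝ) - 1)) ≠ 0 := by
    apply div_ne_zero (by positivity)
    nlinarith
  have h1 : Real.logb 2 d + Real.logb 2 (2 * v / ((d : ℝ) * ((d : ℝ) + 1)))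
      = Real.logb 2 (2 * v / ((d : ℝ) + 1)) := by
    rw [← Real.logb_mul hdne hxne]
    congr 1
    field_simp
  have h2 : Real.logb 2 d + Real.logb 2 (2 * (1 - v) / ((d : ℝ) * ((d : ℝ) - 1)))
      = Real.logb 2 (2 * (1 - v) / ((d : ℝ) - 1)) := by
    rw [← Real.logb_mul hdne hyne]
    congr 1
    have : (d : ℝ) - 1 ≠ 0 := by linarith
    field_simp
  have key : Real.logb 2 d + v * Real.logb 2 (2 * v / ((d : ℝ) * ((d : ℝ) + 1))) +
      (1 - v) * Real.logb 2 (2 * (1 - v) / ((d : ℝ) * ((d : ℝ) - 1)))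
      = v * Real.logb 2 (2 * v / ((d : ℝ) + 1))
        + (1 - v) * Real.logb 2 (2 * (1 - v) / ((d : ℝ) - 1)) := by
    rw [← h1, ← h2]; ring
  rw [key]
  have t1 : v * Real.logb 2 (2 * v / ((d : ℝ) + 1)) < 0 := by
    apply mul_neg_of_pos_of_neg hv0
    have hx0 : 0 < 2 * v / ((d : ℝ) + 1) := by positivity
    have hx1 : 2 * v / ((d : ℝ) + 1) < 1 := by
      rw [div_lt_one (by linarith)]; linarith
    exact Real.logb_neg one_lt_two hx0 hx1
  have t2 : (1 - v) * Real.logb 2 (2 * (1 - v) / ((d : ℝ) - 1)) < 0 := by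
    apply mul_neg_of_pos_of_neg hv1'
    have hy0 : 0 < 2 * (1 - v) / ((d : ℝ) - 1) := by
      apply div_pos (by linarith); linarith
    have hy1 : 2 * (1 - v) / ((d : ℝ) - 1) < 1 := by
      rw [div_lt_one (by linarith)]; linarith
    exact Real.logb_neg one_lt_two hy0 hy1
  linarith
end
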